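/- Let Π(x,v) = Im(H̃_0(v) e^{i v^T Z x}) with H̃_0 Hermitian and absolutely integrable, Z ∈ ℝ^{d×n}, Θ ∈ ℝ^{n×n} antisymmetric, and let μ̃: ℝ^n → ℝ be integrable. Then ∫_{ℝ^n} ∫_{ℝ^d} Π(x,v) μ̃(x − Θ Z^T v) dv dx = 0. -/

import Mathlib

open Matrix MeasureTheory

/-- The integral operator term preserves total mass:
`∫∫ Π(x,v) μ̃(x − ΘZᵀv) dv dx = 0`. -/
theorem integral_term_mass_zero {n d : ℕ}
    (H0 : (Fin d → ℝ) → ℂ) (hH0 : ∀ v, H0 (-v) = starRingEnd ℂ (H0 v))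
    (hH0_int : Integrable H0)
    (Z : Matrix (Fin d) (Fin n) ℝ)
    (Θ : Matrix (Fin n) (Fin n) ℝ) (hΘ : Θᵀ = -Θ)
    (μt : (Fin n → ℝ) → ℝ) (hμt : Integrable μt)
    (Pker : (Fin n → ℝ) → (Fin d → ℝ) → ℝ)
    (hPker : ∀ x v, Pker x v =
      (H0 v * Complex.exp (Complex.I * ((v ⬝ᵥ Z *ᵥ x : ℝ) : ℂ))).im) :
    ∫ x, (∫ v, Pker x v * μt (x - Θ *ᵥ Zᵀ *ᵥ v)) = 0 := by
  set c : (Fin d → ℝ) → (Fin n → ℝ) := fun v => Θ *ᵥ Zᵀ *ᵥ v with hc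
  have keyA : ∀ (x : Fin n → ℝ) (v : Fin d → ℝ), Pker (x + c v) v = Pker x v := by
    intro x v
    have h1 : (Zᵀ *ᵥ v) ⬝ᵥ Θ *ᵥ (Zᵀ *ᵥ v) = -((Zᵀ *ᵥ v) ⬝ᵥ Θ *ᵥ (Zᵀ *ᵥ v)) := by
      conv_lhs => rw [dotProduct_mulVec, ← mulVec_transpose, hΘ, neg_mulVec, neg_dotProduct,
        dotProduct_comm]
    have h2 : v ⬝ᵥ Z *ᵥ (x + c v) = v ⬝ᵥ Z *ᵥ x := by
      rw [hc, mulVec_add, dotProduct_add]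
      have h3 : v ⬝ᵥ Z *ᵥ (Θ *ᵥ Zᵀ *ᵥ v) = (Zᵀ *ᵥ v) ⬝ᵥ Θ *ᵥ (Zᵀ *ᵥ v) := by
        rw [dotProduct_mulVec, ← mulVec_transpose]
      rw [h3]; linarith
    rw [hPker, hPker, h2]
  have keyB : ∀ (x : Fin n → ℝ) (v : Fin d → ℝ), Pker x (-v) = -Pker x v := by
    intro x v
    rw [hPker, hPker, hH0]
    have h1 : ((-v) ⬝ᵥ Z *ᵥ x : ℝ) = -(v ⬝ᵥ Z *ᵥ x) := by rw [neg_dotProduct]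
    rw [h1]
    have h2 : Complex.exp (Complex.I * ((-(v ⬝ᵥ Z *ᵥ x) : ℝ) : ℂ)) =
        starRingEnd ℂ (Complex.exp (Complex.I * ((v ⬝ᵥ Z *ᵥ x : ℝ) : ℂ))) := by
      rw [← Complex.exp_conj, _root_.map_mul, Complex.conj_I, Complex.conj_ofReal]
      push_cast; ring_nf
    rw [h2, ← _root_.map_mul, Complex.conj_im]
  -- bound on the kernel
  have keyC : ∀ (x : Fin n → ℝ) (v : Fin d → ℝ), |Pker x v| ≤ ‖H0 v‖ := by
    intro x v
    rw [hPker]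
    calc |(H0 v * Complex.exp (Complex.I * ((v ⬝ᵥ Z *ᵥ x : ℝ) : ℂ))).im|
        ≤ ‖H0 v * Complex.exp (Complex.I * ((v ⬝ᵥ Z *ᵥ x : ℝ) : ℂ))‖ :=
          Complex.abs_im_le_norm _
      _ = ‖H0 v‖ * ‖Complex.exp (Complex.I * ((v ⬝ᵥ Z *ᵥ x : ℝ) : ℂ))‖ := norm_mul _ _
      _ = ‖H0 v‖ := by
          rw [mul_comm Complex.I]
          simp [Complex.norm_exp_ofReal_mul_I]
  -- continuity of the shear
  have hc_cont : Continuous c := by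
    have h := LinearMap.continuous_of_finiteDimensional (Matrix.mulVecLin (Θ * Zᵀ))
    have he : c = fun v => (Θ * Zᵀ) *ᵥ v := by
      funext v
      show Θ *ᵥ Zᵀ *ᵥ v = (Θ * Zᵀ) *ᵥ v
      exact mulVec_mulVec v Θ Zᵀ
    rw [he]; exact h
  -- the shear is measure preserving on the product space
  have hS' : MeasurePreserving
      (fun p : (Fin d → ℝ) × (Fin n → ℝ) => (p.1, p.2 - c p.1))
      (volume.prod volume) (volume.prod volume) := by
    have hm : Measurable (Function.uncurry fun (v : Fin d → ℝ) (x : Fin n → ℝ) => x - c v) :=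
      measurable_snd.sub (hc_cont.measurable.comp measurable_fst)
    have hae : ∀ᵐ (v : Fin d → ℝ) ∂(volume : Measure (Fin d → ℝ)),
        Measure.map (fun x => x - c v) (volume : Measure (Fin n → ℝ)) = volume := by
      refine Filter.Eventually.of_forall fun v => ?_
      have := (measurePreserving_add_right (volume : Measure (Fin n → ℝ)) (-(c v))).map_eq
      simpa [sub_eq_add_neg] using this
    exact (MeasurePreserving.id volume).skew_product hm hae
  have hS : MeasurePreserving
      (fun p : (Fin n → ℝ) × (Fin d → ℝ) => (p.1 - c p.2, p.2))
      (volume.prod volume) (volume.prod volume) := by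
    have h1 := Measure.measurePreserving_swap
      (μ := (volume : Measure (Fin d → ℝ))) (ν := (volume : Measure (Fin n → ℝ)))
    have h2 := Measure.measurePreserving_swap
      (μ := (volume : Measure (Fin n → ℝ))) (ν := (volume : Measure (Fin d → ℝ)))
    exact (h1.comp hS').comp h2
  -- measurability of the integrand
  have hmeas : AEStronglyMeasurable
      (fun p : (Fin n → ℝ) × (Fin d → ℝ) => Pker p.1 p.2 * μt (p.1 - c p.2))
      (volume.prod volume) := by
    have h1 : AEStronglyMeasurable
        (fun p : (Fin n → ℝ) × (Fin d → ℝ) => H0 p.2) (volume.prod volume) :=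
      hH0_int.aestronglyMeasurable.comp_snd
    have h2 : Continuous (fun p : (Fin n → ℝ) × (Fin d → ℝ) =>
        Complex.exp (Complex.I * ((p.2 ⬝ᵥ Z *ᵥ p.1 : ℝ) : ℂ))) := by
      apply Complex.continuous_exp.comp
      apply continuous_const.mul
      apply Complex.continuous_ofReal.comp
      have : Continuous (fun p : (Fin n → ℝ) × (Fin d → ℝ) => p.2 ⬝ᵥ Z *ᵥ p.1) := by
        simp only [dotProduct, Matrix.mulVec]
        fun_prop
      exact this
    have h3 : AEStronglyMeasurable
        (fun p : (Fin n → ℝ) × (Fin d → ℝ) => Pker p.1 p.2) (volume.prod volume) := by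
      have := (h1.mul h2.aestronglyMeasurable).im
      simpa [hPker] using this
    have h4 : AEStronglyMeasurable
        (fun p : (Fin n → ℝ) × (Fin d → ℝ) => μt (p.1 - c p.2)) (volume.prod volume) := by
      have := hμt.aestronglyMeasurable.comp_fst (ν := (volume : Measure (Fin d → ℝ)))
      exact this.comp_quasiMeasurePreserving hS.quasiMeasurePreserving
    exact h3.mul h4
  -- integrability of the integrand on the product
  have hbound : Integrable
      (fun p : (Fin n → ℝ) × (Fin d → ℝ) => ‖μt (p.1 - c p.2)‖ * ‖H0 p.2‖)
      (volume.prod volume) := by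
    have hb0 : Integrable
        (fun p : (Fin n → ℝ) × (Fin d → ℝ) => ‖μt p.1‖ * ‖H0 p.2‖)
        (volume.prod volume) := hμt.norm.mul_prod hH0_int.norm
    have := (hS.integrable_comp hb0.aestronglyMeasurable).mpr hb0
    simpa [Function.comp_def] using this
  have hint : Integrable
      (fun p : (Fin n → ℝ) × (Fin d → ℝ) => Pker p.1 p.2 * μt (p.1 - c p.2))
      (volume.prod volume) := by
    refine hbound.mono' hmeas ?_
    refine Filter.Eventually.of_forall fun p => ?_
    rw [Real.norm_eq_abs, abs_mul]
    calc |Pker p.1 p.2| * |μt (p.1 - c p.2)|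
        ≤ ‖H0 p.2‖ * |μt (p.1 - c p.2)| := by
          apply mul_le_mul_of_nonneg_right (keyC _ _) (abs_nonneg _)
      _ = ‖μt (p.1 - c p.2)‖ * ‖H0 p.2‖ := by rw [Real.norm_eq_abs]; ring
  -- Fubini
  have hswap : ∫ x, (∫ v, Pker x v * μt (x - c v)) =
      ∫ v, (∫ x, Pker x v * μt (x - c v)) :=
    integral_integral_swap hint
  rw [show (fun x => ∫ v, Pker x v * μt (x - Θ *ᵥ Zᵀ *ᵥ v)) =
      fun x => ∫ v, Pker x v * μt (x - c v) from rfl]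
  rw [hswap]
  -- translation in x for each fixed v
  have htrans : ∀ v, (∫ x, Pker x v * μt (x - c v)) = ∫ x, Pker x v * μt x := by
    intro v
    have := integral_add_right_eq_self (μ := (volume : Measure (Fin n → ℝ)))
      (fun x => Pker x v * μt (x - c v)) (c v)
    rw [← this]
    congr 1
    funext x
    rw [keyA, add_sub_cancel_right]
  simp_rw [htrans]
  -- oddness in v
  set g : (Fin d → ℝ) → ℝ := fun v => ∫ x, Pker x v * μt x with hg
  have hodd : ∀ v, g (-v) = -g v := by
    intro v
    rw [hg]
    simp only [keyB, neg_mul]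
    rw [integral_neg]
  have hneg : ∫ v, g v = ∫ v, g (-v) := (integral_neg_eq_self g volume).symm
  have hodd' : ∫ v, g (-v) = -∫ v, g v := by
    simp only [hodd]
    exact integral_neg g
  linarith [hneg, hodd']
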